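/- For two chain recurrent points x and y of a flow on a compact metric space, x and y are chain equivalent if and only if the set of attractors containing x equals the set of attractors containing y. -/

import Mathlib

variable {X : Type*}

/-- `φ` is a flow: a continuous group action of `ℝ` on `X`. -/
def IsFlow [TopologicalSpace X] (φ : X → ℝ → X) : Prop :=
  Continuous (fun p : X × ℝ => φ p.1 p.2) ∧ (∀ x, φ x 0 = x) ∧
    ∀ (x : X) (s t : ℝ), φ (φ x s) t = φ x (s + t)

/-- An `(ε, T)`-chain from `x` to `y`: a finite sequence of points starting at `x`
and ending at `y`, with jump times at least `T`, where each jump lands within `ε`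
of the next point. -/
def IsETChain [MetricSpace X] (φ : X → ℝ → X) (ε T : ℝ) (x y : X) : Prop :=
  ∃ (n : ℕ) (z : ℕ → X) (t : ℕ → ℝ), 1 ≤ n ∧ z 0 = x ∧ z n = y ∧
    ∀ i < n, T ≤ t i ∧ dist (φ (z i) (t i)) (z (i + 1)) < ε

/-- A pseudo-orbit from `x` to `y`: `(ε,T)`-chains exist for all `ε, T > 0`. -/
def Pseudo [MetricSpace X] (φ : X → ℝ → X) (x y : X) : Prop :=
  ∀ ε > (0 : ℝ), ∀ T > (0 : ℝ), IsETChain φ ε T x y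

/-- A point is chain recurrent if there is a pseudo-orbit from it to itself. -/
def ChainRec [MetricSpace X] (φ : X → ℝ → X) (x : X) : Prop := Pseudo φ x x

/-- A set is invariant under the flow `φ`. -/
def IsInvariant' (φ : X → ℝ → X) (A : Set X) : Prop :=
  ∀ x ∈ A, ∀ t : ℝ, φ x t ∈ A

/-- `A` is an attractor of `φ`: a compact nonempty invariant set having a
neighbourhood all of whose points converge uniformly to `A`. -/
def IsAttractor [MetricSpace X] (φ : X → ℝ → X) (A : Set X) : Prop :=
  IsCompact A ∧ A.Nonempty ∧ IsInvariant' φ A ∧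
    ∃ U : Set X, IsOpen U ∧ A ⊆ U ∧
      ∀ ε > (0 : ℝ), ∃ T : ℝ, ∀ t ≥ T, ∀ x ∈ U, Metric.infDist (φ x t) A < ε

/-- A repellor is an attractor of the time-reversed flow. -/
def IsRepellor [MetricSpace X] (φ : X → ℝ → X) (A : Set X) : Prop :=
  IsAttractor (fun x t => φ x (-t)) A

/-- `B` is a trapping region for `A`: an open forward-invariant set with
`φ(cl B, t) ⊆ B` for all `t ≥ T` for some `T > 0`, and `A = ⋂_{t ≥ 0} φ(B, t)`. -/
def IsTrappingFor [TopologicalSpace X] (φ : X → ℝ → X) (A B : Set X) : Prop :=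
  IsOpen B ∧ (∀ x ∈ B, ∀ t ≥ (0 : ℝ), φ x t ∈ B) ∧
    (∃ T > (0 : ℝ), ∀ t ≥ T, ∀ x ∈ closure B, φ x t ∈ B) ∧
    A = ⋂ t ∈ Set.Ici (0 : ℝ), (fun x => φ x t) '' B

/-- `A` is an attractor of `φ` (trapping-region definition). -/
def IsAttractorT [TopologicalSpace X] (φ : X → ℝ → X) (A : Set X) : Prop :=
  IsCompact A ∧ A.Nonempty ∧ IsInvariant' φ A ∧ ∃ B, IsTrappingFor φ A B

/-- The dual repellor of an attractor with trapping region `B`: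
`A* = ⋂_{t ≤ 0} φ(X \ B, t)`. -/
def dualRepellor (φ : X → ℝ → X) (B : Set X) : Set X :=
  ⋂ t ∈ Set.Ici (0 : ℝ), (fun x => φ x (-t)) '' Bᶜ

section Aux
set_option linter.unusedSectionVars false
variable [MetricSpace X] [CompactSpace X] {φ : X → ℝ → X}

lemma unifCont (hc : Continuous fun p : X × ℝ => φ p.1 p.2) {ε : ℝ} (hε : 0 < ε) (b : ℝ) :
    ∃ δ > 0, ∀ a c : X, dist a c < δ → ∀ s, 0 ≤ s → s ≤ b → dist (φ a s) (φ c s) < ε := by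
  have hK : IsCompact ((Set.univ : Set X) ×ˢ Set.Icc (0:ℝ) b) :=
    isCompact_univ.prod isCompact_Icc
  have hu := hK.uniformContinuousOn_of_continuous hc.continuousOn
  rw [Metric.uniformContinuousOn_iff] at hu
  obtain ⟨δ, hδ, h⟩ := hu ε hε
  refine ⟨δ, hδ, fun a c hac s hs0 hsb => ?_⟩
  have := h (a, s) ⟨Set.mem_univ _, hs0, hsb⟩ (c, s) ⟨Set.mem_univ _, hs0, hsb⟩ ?_
  · exact this
  · rw [Prod.dist_eq]
    simp [dist_self, hac, hδ]

lemma chain_mono {ε ε' T T' : ℝ} {x z : X} (h : IsETChain φ ε T x z) (hε : ε ≤ ε') (hT : T' ≤ T) :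
    IsETChain φ ε' T' x z := by
  obtain ⟨n, zz, tt, hn, h0, hend, hstep⟩ := h
  exact ⟨n, zz, tt, hn, h0, hend, fun i hi =>
    ⟨hT.trans (hstep i hi).1, lt_of_lt_of_le (hstep i hi).2 hε⟩⟩

lemma chain_extend {ε T : ℝ} {x z w : X} (h : IsETChain φ ε T x z) {t₀ : ℝ} (ht : T ≤ t₀)
    (hd : dist (φ z t₀) w < ε) : IsETChain φ ε T x w := by
  obtain ⟨n, zz, tt, hn, h0, hend, hstep⟩ := h
  refine ⟨n+1, fun i => if i ≤ n then zz i else w, fun i => if i < n then tt i else t₀,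
    hn.trans (Nat.le_succ n), by simp [h0], by simp, ?_⟩
  intro i hi
  rcases lt_or_ge i n with h1 | h1
  · have h2 := hstep i h1
    simp only [if_pos h1.le, if_pos (Nat.succ_le_of_lt h1), if_pos h1]
    exact h2
  · have hin : i = n := le_antisymm (Nat.lt_succ_iff.mp hi) h1
    subst hin
    simp only [if_pos le_rfl, if_neg (Nat.not_succ_le_self _), if_neg (lt_irrefl _), hend]
    exact ⟨ht, hd⟩

lemma chain_last {ε T : ℝ} {x z : X} (h : IsETChain φ ε T x z) :
    ∃ b t₀, (b = x ∨ IsETChain φ ε T x b) ∧ T ≤ t₀ ∧ dist (φ b t₀) z < ε := by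
  obtain ⟨n, zz, tt, hn, h0, hend, hstep⟩ := h
  have hn1 : n - 1 + 1 = n := Nat.succ_pred_eq_of_pos hn
  have hlast := hstep (n-1) (by omega)
  refine ⟨zz (n-1), tt (n-1), ?_, hlast.1, by rw [hn1, hend] at hlast; exact hlast.2⟩
  rcases eq_or_lt_of_le hn with h1 | h1
  · left; rw [← h0]; congr 1; omega
  · refine Or.inr ⟨n-1, zz, tt, ?_, h0, rfl, fun i hi => hstep i (by omega)⟩
    omega

lemma chain_shift {ε δ T : ℝ} {x p : X} (h : IsETChain φ δ T x p)
    (hgrp : ∀ (x : X) (s t : ℝ), φ (φ x s) t = φ x (s + t)) {s : ℝ} (hs : 0 ≤ s) (hδε : δ ≤ ε)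
    (hmod : ∀ a c : X, dist a c < δ → dist (φ a s) (φ c s) < ε) :
    IsETChain φ ε T x (φ p s) := by
  obtain ⟨n, zz, tt, hn, h0, hend, hstep⟩ := h
  refine ⟨n, fun i => if i < n then zz i else φ p s,
    fun i => if i + 1 < n then tt i else tt i + s, hn, ?_,
    by show (if n < n then zz n else φ p s) = φ p s; rw [if_neg (lt_irrefl n)], ?_⟩
  · show (if 0 < n then zz 0 else φ p s) = x
    rw [if_pos (show 0 < n from hn)]; exact h0
  intro i hi
  rcases lt_or_ge (i+1) n with h1 | h1
  · have h2 := hstep i hi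
    simp only [if_pos hi, if_pos h1]
    exact ⟨h2.1, lt_of_lt_of_le h2.2 hδε⟩
  · have hne : ¬ (i + 1 < n) := not_lt_of_ge h1
    simp only [if_pos hi, if_neg hne]
    have h2 := hstep i hi
    refine ⟨by linarith [h2.1], ?_⟩
    rw [← hgrp]
    have hin : i + 1 = n := le_antisymm hi h1
    have hzp : zz (i+1) = p := by rw [hin, hend]
    rw [hzp] at h2
    exact hmod _ _ h2.2

end Aux



section Aux
set_option linter.unusedSectionVars false
variable [MetricSpace X] [CompactSpace X] {φ : X → ℝ → X}

lemma slice_cont (hc : Continuous fun p : X × ℝ => φ p.1 p.2) (c : ℝ) :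
    Continuous fun u : X => φ u c :=
  hc.comp (continuous_id.prodMk continuous_const)

lemma closure_fwdInv (hc : Continuous fun p : X × ℝ => φ p.1 p.2) {B : Set X}
    (hfwd : ∀ w ∈ B, ∀ t, 0 ≤ t → φ w t ∈ B) :
    ∀ w ∈ closure B, ∀ t, 0 ≤ t → φ w t ∈ closure B := by
  intro w hw t ht
  have h1 : (fun u => φ u t) '' closure B ⊆ closure ((fun u => φ u t) '' B) :=
    image_closure_subset_closure_image (slice_cont hc t)
  have h2 := h1 ⟨w, hw, rfl⟩
  refine closure_mono ?_ h2
  rintro _ ⟨b, hb, rfl⟩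
  exact hfwd b hb t ht

lemma core_mem (hgrp : ∀ (x : X) (s t : ℝ), φ (φ x s) t = φ x (s + t))
    (hc : Continuous fun p : X × ℝ => φ p.1 p.2)
    {B : Set X} {T₀ : ℝ} (hT₀ : 0 < T₀)
    (hfwdcl : ∀ w ∈ closure B, ∀ s, 0 ≤ s → φ w s ∈ closure B)
    (htrap : ∀ t, T₀ ≤ t → ∀ w ∈ closure B, φ w t ∈ B)
    {y : X} (hy : ∀ ε > (0:ℝ), ∀ T > (0:ℝ), ∃ b ∈ B, ∃ t, T ≤ t ∧ dist (φ b t) y < ε)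
    {s : ℝ} (hs : 0 ≤ s) : y ∈ (fun u => φ u s) '' B := by
  have hKc : IsCompact ((fun u => φ u T₀) '' closure B) :=
    (isClosed_closure.isCompact).image (slice_cont hc T₀)
  have hKB : (fun u => φ u T₀) '' closure B ⊆ B := by
    rintro _ ⟨u, hu, rfl⟩; exact htrap T₀ le_rfl u hu
  have hKsc : IsCompact ((fun u => φ u s) '' ((fun u => φ u T₀) '' closure B)) :=
    hKc.image (slice_cont hc s)
  have hycl : y ∈ closure ((fun u => φ u s) '' ((fun u => φ u T₀) '' closure B)) := by
    rw [Metric.mem_closure_iff]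
    intro ε hε
    obtain ⟨b, hb, t, ht, hd⟩ := hy ε hε (s + T₀ + 1) (by linarith)
    refine ⟨φ b t, ⟨φ (φ b (t - s - T₀)) T₀,
      ⟨φ b (t - s - T₀), hfwdcl b (subset_closure hb) _ (by linarith), rfl⟩, ?_⟩,
      by rwa [dist_comm]⟩
    show φ (φ (φ b (t - s - T₀)) T₀) s = φ b t
    rw [hgrp, hgrp]; congr 1; ring
  rw [hKsc.isClosed.closure_eq] at hycl
  exact Set.image_mono hKB hycl

end Aux

section Main
set_option linter.unusedSectionVars false
set_option maxHeartbeats 1000000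
variable [MetricSpace X] [CompactSpace X] {φ : X → ℝ → X}

lemma attractor_absorb (hφ : IsFlow φ) {A : Set X} (hA : IsAttractorT φ A)
    {x y : X} (hxy : Pseudo φ x y) (hxA : x ∈ A) : y ∈ A := by
  obtain ⟨hcont, hid, hgrp⟩ := hφ
  obtain ⟨-, -, -, B, hBo, hBfwd, ⟨T₀, hT₀, htrap⟩, hAeq⟩ := hA
  -- A ⊆ B
  have hAB : A ⊆ B := by
    intro a ha
    rw [hAeq] at ha
    obtain ⟨b, hb, hba⟩ := Set.mem_iInter₂.mp ha 0 (Set.mem_Ici.mpr le_rfl)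
    simp only at hba
    rw [hid b] at hba
    rwa [← hba]
  have hclfwd : ∀ w ∈ closure B, ∀ s, 0 ≤ s → φ w s ∈ closure B :=
    closure_fwdInv hcont (fun w hw t ht => hBfwd w hw t ht)
  -- thickening constant
  have hKc : IsCompact ((fun u => φ u T₀) '' closure B) :=
    (isClosed_closure.isCompact).image (slice_cont hcont T₀)
  have hKB : (fun u => φ u T₀) '' closure B ⊆ B := by
    rintro _ ⟨u, hu, rfl⟩; exact htrap T₀ le_rfl u hu
  obtain ⟨ε₀, hε₀, hthick⟩ := hKc.exists_thickening_subset_open hBo hKB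
  -- chains with small jumps starting in B stay in B
  have hstay : ∀ (n : ℕ) (zz : ℕ → X) (tt : ℕ → ℝ), zz 0 ∈ B →
      (∀ i < n, T₀ ≤ tt i ∧ dist (φ (zz i) (tt i)) (zz (i+1)) < ε₀) →
      ∀ i, i ≤ n → zz i ∈ B := by
    intro n zz tt hz0 hstep i
    induction i with
    | zero => intro _; exact hz0
    | succ k ih =>
      intro hk
      have hkB := ih (by omega)
      have hst := hstep k (by omega)
      have hmem : φ (zz k) (tt k) ∈ (fun u => φ u T₀) '' closure B := by
        refine ⟨φ (zz k) (tt k - T₀),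
          subset_closure (hBfwd _ hkB _ (by linarith [hst.1])), ?_⟩
        show φ (φ (zz k) (tt k - T₀)) T₀ = φ (zz k) (tt k)
        rw [hgrp]; congr 1; ring
      apply hthick
      rw [Metric.mem_thickening_iff]
      exact ⟨φ (zz k) (tt k), hmem, by rw [dist_comm]; exact hst.2⟩
  -- conclude via core_mem
  rw [hAeq]
  rw [Set.mem_iInter₂]
  intro s hs
  refine core_mem hgrp hcont hT₀ hclfwd (fun t ht w hw => htrap t ht w hw) ?_ hs
  intro ε' hε' T hT
  obtain ⟨n, zz, tt, hn, h0, hend, hstep⟩ :=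
    hxy (min ε' ε₀) (lt_min hε' hε₀) (max T T₀) (lt_of_lt_of_le hT₀ (le_max_right _ _))
  have hall : ∀ i, i ≤ n → zz i ∈ B := by
    refine hstay n zz tt (by rw [h0]; exact hAB hxA) ?_
    intro i hi
    exact ⟨(le_max_right T T₀).trans (hstep i hi).1,
      lt_of_lt_of_le (hstep i hi).2 (min_le_right _ _)⟩
  have hlast := hstep (n-1) (by omega)
  have hn1 : n - 1 + 1 = n := Nat.succ_pred_eq_of_pos hn
  rw [hn1, hend] at hlast
  exact ⟨zz (n-1), hall (n-1) (by omega), tt (n-1),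
    (le_max_left T T₀).trans hlast.1, lt_of_lt_of_le hlast.2 (min_le_left _ _)⟩

end Main

section Main2
set_option linter.unusedSectionVars false
set_option maxHeartbeats 1000000
variable [MetricSpace X] [CompactSpace X] {φ : X → ℝ → X}

lemma exists_attractor (hφ : IsFlow φ) {x y : X} (hx : ChainRec φ x)
    (hnp : ¬ Pseudo φ x y) : ∃ A, IsAttractorT φ A ∧ x ∈ A ∧ y ∉ A := by
  obtain ⟨hcont, hid, hgrp⟩ := hφ
  simp only [Pseudo] at hnp
  push_neg at hnp
  obtain ⟨ε, hε, T₀, hT₀, hnxy⟩ := hnp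
  obtain ⟨δ₁, hδ₁, hmod₁⟩ := unifCont hcont hε (2*T₀)
  set δ := min δ₁ ε with hδdef
  have hδ : 0 < δ := lt_min hδ₁ hε
  have hδε : δ ≤ ε := min_le_right _ _
  obtain ⟨δ₂, hδ₂, hmod₂⟩ := unifCont hcont hδ (2*T₀)
  set P : Set X := {z | IsETChain φ δ T₀ x z} with hPdef
  have hxP : x ∈ P := hx δ hδ T₀ hT₀
  have hext : ∀ z ∈ P, ∀ t₀, T₀ ≤ t₀ → ∀ w, dist (φ z t₀) w < δ → w ∈ P :=
    fun z hz t₀ ht w hd => chain_extend hz ht hd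
  -- P is open
  have hPopen : IsOpen P := by
    rw [Metric.isOpen_iff]
    intro w hw
    obtain ⟨b, t₀, hb, ht₀, hd⟩ := chain_last hw
    have hbP : b ∈ P := by rcases hb with rfl | h; exacts [hxP, h]
    refine ⟨δ - dist (φ b t₀) w, by linarith, fun w' hw' => ?_⟩
    refine hext b hbP t₀ ht₀ w' ?_
    calc dist (φ b t₀) w' ≤ dist (φ b t₀) w + dist w w' := dist_triangle _ _ _
      _ < δ := by rw [Metric.mem_ball, dist_comm] at hw'; linarith
  -- the trapping region
  set B : Set X := ⋃ s ∈ Set.Ici (0:ℝ), (fun w => φ w (-s)) ⁻¹' P with hBdef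
  have hmemB : ∀ w, w ∈ B ↔ ∃ s, 0 ≤ s ∧ φ w (-s) ∈ P := by
    intro w
    simp only [hBdef, Set.mem_iUnion, Set.mem_preimage, Set.mem_Ici, exists_prop]
  have hPB : P ⊆ B := fun p hp => (hmemB p).2 ⟨0, le_rfl, by rw [neg_zero, hid]; exact hp⟩
  have hBopen : IsOpen B :=
    isOpen_biUnion fun s _ => hPopen.preimage (slice_cont hcont (-s))
  have hBfwd : ∀ w ∈ B, ∀ t, 0 ≤ t → φ w t ∈ B := by
    intro w hw t ht
    obtain ⟨s, hs, hp⟩ := (hmemB w).1 hw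
    refine (hmemB _).2 ⟨s + t, by linarith, ?_⟩
    rw [hgrp]
    have he : t + -(s+t) = -s := by ring
    rw [he]; exact hp
  have hclfwd : ∀ w ∈ closure B, ∀ s, 0 ≤ s → φ w s ∈ closure B :=
    closure_fwdInv hcont hBfwd
  -- B is contained in the ε-chain set
  have hBPε : ∀ w ∈ B, IsETChain φ ε T₀ x w := by
    intro w hw
    obtain ⟨s, hs, hp⟩ := (hmemB w).1 hw
    have hwp : φ (φ w (-s)) s = w := by rw [hgrp, neg_add_cancel, hid]
    rcases le_or_gt T₀ s with h1 | h1
    · exact chain_extend (chain_mono hp hδε le_rfl) h1 (by rw [hwp, dist_self]; exact hε)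
    · have := chain_shift hp hgrp hs hδε
        (fun a c h => hmod₁ a c (lt_of_lt_of_le h (min_le_left _ _)) s hs (by linarith))
      rwa [hwp] at this
  have hynB : y ∉ B := fun hyB => hnxy (chain_mono (hBPε y hyB) le_rfl le_rfl)
  -- key trapping fact
  have hkey : ∀ u ∈ closure B, φ u (2*T₀) ∈ P := by
    intro u hu
    obtain ⟨v, hv, hd⟩ := Metric.mem_closure_iff.1 hu δ₂ hδ₂
    have hd2 : dist (φ u (2*T₀)) (φ v (2*T₀)) < δ :=
      hmod₂ u v hd (2*T₀) (by linarith) le_rfl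
    obtain ⟨s, hs, hp⟩ := (hmemB v).1 hv
    have heq : φ (φ v (-s)) (s + 2*T₀) = φ v (2*T₀) := by
      rw [hgrp]
      congr 1; ring
    refine hext _ hp (s + 2*T₀) (by linarith) _ ?_
    rw [heq, dist_comm]
    exact hd2
  have htrapB : ∀ t, 2*T₀ ≤ t → ∀ w ∈ closure B, φ w t ∈ B := by
    intro t ht w hw
    have heq : φ (φ w (t - 2*T₀)) (2*T₀) = φ w t := by rw [hgrp]; congr 1; ring
    rw [← heq]
    exact hPB (hkey _ (hclfwd w hw _ (by linarith)))
  -- the attractor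
  set A : Set X := ⋂ t ∈ Set.Ici (0:ℝ), (fun x => φ x t) '' B with hAdef
  have hAB : A ⊆ B := by
    intro a ha
    obtain ⟨b, hb, hba⟩ := Set.mem_iInter₂.mp ha 0 (Set.mem_Ici.mpr le_rfl)
    simp only at hba
    rw [hid b] at hba
    rwa [← hba]
  have hxA : x ∈ A := by
    rw [hAdef, Set.mem_iInter₂]
    intro s hs
    refine core_mem hgrp hcont (by linarith : (0:ℝ) < 2*T₀) hclfwd htrapB ?_ hs
    intro ε' hε' T hT
    have hchain : IsETChain φ (min ε' δ) (max T T₀) x x :=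
      hx (min ε' δ) (lt_min hε' hδ) (max T T₀) (lt_of_lt_of_le hT₀ (le_max_right _ _))
    obtain ⟨b, t₀, hb, ht₀, hd⟩ := chain_last hchain
    have hbB : b ∈ B := by
      rcases hb with rfl | h
      · exact hPB hxP
      · exact hPB (chain_mono h (min_le_right _ _) (le_max_right _ _))
    exact ⟨b, hbB, t₀, (le_max_left T T₀).trans ht₀,
      lt_of_lt_of_le hd (min_le_left _ _)⟩
  have hynA : y ∉ A := fun h => hynB (hAB h)
  -- compactness etc. via K
  set K : Set X := (fun u => φ u (2*T₀)) '' closure B with hKdef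
  have hKcomp : IsCompact K := (isClosed_closure.isCompact).image (slice_cont hcont (2*T₀))
  have hKB : K ⊆ B := by rintro _ ⟨u, hu, rfl⟩; exact hPB (hkey u hu)
  have hKne : K.Nonempty := ⟨_, ⟨x, subset_closure (hPB hxP), rfl⟩⟩
  have hKfwd : ∀ k ∈ K, ∀ s, 0 ≤ s → φ k s ∈ K := by
    rintro _ ⟨u, hu, rfl⟩ s hs
    refine ⟨φ u s, hclfwd u hu s hs, ?_⟩
    show φ (φ u s) (2*T₀) = φ (φ u (2*T₀)) s
    rw [hgrp, hgrp]; congr 1; ring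
  have himg_mono : ∀ r r', 0 ≤ r → r ≤ r' →
      (fun u => φ u r') '' K ⊆ (fun u => φ u r) '' K := by
    rintro r r' hr hrr' _ ⟨k, hk, rfl⟩
    refine ⟨φ k (r' - r), hKfwd k hk _ (by linarith), ?_⟩
    show φ (φ k (r' - r)) r = φ k r'
    rw [hgrp]; congr 1; ring
  have hAeqK : A = ⋂ t ∈ Set.Ici (0:ℝ), (fun u => φ u t) '' K := by
    apply Set.Subset.antisymm
    · intro a ha
      rw [Set.mem_iInter₂]
      intro t ht
      obtain ⟨b, hb, hba⟩ := Set.mem_iInter₂.mp ha (t + 2*T₀) (by simp at ht ⊢; linarith)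
      simp only at hba
      refine ⟨φ b (2*T₀), ⟨b, subset_closure hb, rfl⟩, ?_⟩
      show φ (φ b (2*T₀)) t = a
      rw [hgrp, ← hba]; congr 1; ring
    · refine Set.iInter₂_mono fun t ht => ?_
      exact Set.image_mono hKB
  have hAcomp : IsCompact A := by
    rw [hAeqK]
    refine IsClosed.isCompact (isClosed_biInter fun t ht => ?_)
    exact (hKcomp.image (slice_cont hcont t)).isClosed
  have hAne : A.Nonempty := by
    rw [hAeqK]
    have hZ : ∀ t : ℝ, IsCompact ((fun u => φ u (max t 0)) '' K) :=
      fun t => hKcomp.image (slice_cont hcont _)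
    have hne := IsCompact.nonempty_iInter_of_directed_nonempty_isCompact_isClosed
      (fun t : ℝ => (fun u => φ u (max t 0)) '' K)
      (fun t t' => ⟨max t t', himg_mono _ _ (le_max_right t 0) (max_le_max (le_max_left _ _) le_rfl),
        himg_mono _ _ (le_max_right t' 0) (max_le_max (le_max_right _ _) le_rfl)⟩)
      (fun t => hKne.image _) (fun t => hZ t) (fun t => (hZ t).isClosed)
    obtain ⟨a, ha⟩ := hne
    refine ⟨a, ?_⟩
    rw [Set.mem_iInter₂]
    intro t ht
    have := Set.mem_iInter.mp ha t
    rwa [max_eq_left (Set.mem_Ici.mp ht)] at this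
  have hAinv : IsInvariant' φ A := by
    intro z hz t
    have hback : ∀ r : ℝ, φ z r ∈ B := by
      intro r
      rcases le_or_gt 0 r with h1 | h1
      · exact hBfwd z (hAB hz) r h1
      · obtain ⟨b, hb, hbz⟩ := Set.mem_iInter₂.mp hz (-r) (Set.mem_Ici.mpr (by linarith))
        simp only at hbz
        have : φ z r = b := by rw [← hbz, hgrp, neg_add_cancel, hid]
        rwa [this]
    rw [hAdef, Set.mem_iInter₂]
    intro s hs
    refine ⟨φ z (t - s), hback _, ?_⟩
    show φ (φ z (t - s)) s = φ z t
    rw [hgrp]; congr 1; ring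
  exact ⟨A, ⟨hAcomp, hAne, hAinv, B, hBopen, hBfwd, ⟨2*T₀, by linarith, fun t ht w hw => htrapB t ht w hw⟩, rfl⟩, hxA, hynA⟩

end Main2

/-- two chain recurrent points are chain equivalent iff they are
contained in exactly the same attractors. -/
theorem chain_equiv_iff_same_attractors [MetricSpace X] [CompactSpace X]
    (φ : X → ℝ → X) (hφ : IsFlow φ) (x y : X)
    (hx : ChainRec φ x) (hy : ChainRec φ y) :
    (Pseudo φ x y ∧ Pseudo φ y x) ↔
      (∀ A : Set X, IsAttractorT φ A → (x ∈ A ↔ y ∈ A)) := by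
  constructor
  · rintro ⟨hxy, hyx⟩ A hA
    exact ⟨fun h => attractor_absorb hφ hA hxy h, fun h => attractor_absorb hφ hA hyx h⟩
  · intro h
    constructor
    · by_contra hn
      obtain ⟨A, hA, hxA, hyA⟩ := exists_attractor hφ hx hn
      exact hyA ((h A hA).1 hxA)
    · by_contra hn
      obtain ⟨A, hA, hyA, hxA⟩ := exists_attractor hφ hy hn
      exact hxA ((h A hA).2 hyA)
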